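/- In any finite digraph D = (V, A) with irreflexive arc relation, there exists an acyclic set S ⊆ V (i.e., the subdigraph induced by S contains no directed cycle) of size at least ∑_{v ∈ V} 1/(d⁺(v) + 1), where d⁺(v) is the out-degree of v. -/

import Mathlib

open Finset

/-- `S` is an acyclic set for the arc relation `A`: the subdigraph induced by `S`
has no directed cycle (no vertex reaches itself via arcs inside `S`). -/
def AcyclicOn {V : Type*} (A : V → V → Prop) (S : Finset V) : Prop :=
  ∀ v : V, ¬ Relation.TransGen (fun x y => x ∈ S ∧ y ∈ S ∧ A x y) v v

/-- The out-degree of `v`: the number of vertices `u` with an arc `(v, u)`. -/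
def outDeg {V : Type*} [Fintype V] (A : V → V → Prop) [DecidableRel A] (v : V) : ℕ :=
  (Finset.univ.filter (fun u => A v u)).card

private lemma transGen_restrict {V : Type*} {R : V → V → Prop} {v : V}
    (hv : ∀ x, ¬ R v x) {a b : V} (h : Relation.TransGen R a b) (hb : b ≠ v) :
    Relation.TransGen (fun x y => R x y ∧ x ≠ v ∧ y ≠ v) a b := by
  induction h with
  | single h =>
      refine Relation.TransGen.single ⟨h, ?_, hb⟩
      rintro rfl; exact hv _ h
  | @tail b c hab hbc ih =>
      have hb' : b ≠ v := fun he => hv _ (he ▸ hbc)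
      exact (ih hb').tail ⟨hbc, hb', hb⟩

private lemma caro_wei_aux {V : Type*} [Fintype V] [DecidableEq V]
    (A : V → V → Prop) [DecidableRel A] (hirr : Irreflexive A) (W : Finset V) :
    ∃ S : Finset V, S ⊆ W ∧ AcyclicOn A S ∧
      (∑ v ∈ W, (1 : ℝ) / ((W.filter (A v)).card + 1)) ≤ S.card := by
  induction W using Finset.strongInduction with
  | _ W ih =>
  rcases W.eq_empty_or_nonempty with rfl | hW
  · refine ⟨∅, subset_rfl, ?_, by simp⟩
    intro w hw
    obtain ⟨c, h, -⟩ := Relation.TransGen.head'_iff.mp hw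
    exact absurd h.1 (notMem_empty _)
  · obtain ⟨v, hvW, hmin⟩ := W.exists_min_image (fun u => ((W.filter (A u)).card : ℕ)) hW
    set N : Finset V := W.filter (A v) with hN
    set T : Finset V := insert v N with hT
    have hTsub : T ⊆ W := insert_subset hvW (filter_subset _ _)
    set W' : Finset V := W \ T with hW'
    have hW'ssub : W' ⊂ W := Finset.sdiff_ssubset hTsub ⟨v, mem_insert_self _ _⟩
    obtain ⟨S', hS'sub, hS'acyc, hS'bound⟩ := ih W' hW'ssub
    have hvW' : v ∉ W' := fun h => (mem_sdiff.mp h).2 (mem_insert_self _ _)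
    have hvS' : v ∉ S' := fun h => hvW' (hS'sub h)
    set S : Finset V := insert v S' with hS
    have hcard : (S.card : ℝ) = S'.card + 1 := by
      rw [hS, card_insert_of_notMem hvS']; push_cast; ring
    -- no arcs out of v inside S
    have hnoout : ∀ x, ¬ (v ∈ S ∧ x ∈ S ∧ A v x) := by
      rintro x ⟨-, hxS, hAx⟩
      rcases mem_insert.mp hxS with rfl | hxS'
      · exact hirr _ hAx
      · have hxW' := hS'sub hxS'
        rw [hW', mem_sdiff] at hxW'
        exact hxW'.2 (mem_insert_of_mem (mem_filter.mpr ⟨hxW'.1, hAx⟩))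
    refine ⟨S, ?_, ?_, ?_⟩
    · exact insert_subset hvW (hS'sub.trans ((sdiff_subset).trans subset_rfl))
    · -- acyclicity
      intro w hw
      by_cases hwv : w = v
      · subst hwv
        obtain ⟨c, h, -⟩ := Relation.TransGen.head'_iff.mp hw
        exact hnoout _ h
      · have h' := transGen_restrict hnoout hw hwv
        refine hS'acyc w (Relation.TransGen.mono ?_ _ _ h')
        rintro x y ⟨⟨hxS, hyS, hA⟩, hx, hy⟩
        exact ⟨mem_of_mem_insert_of_ne hxS hx, mem_of_mem_insert_of_ne hyS hy, hA⟩
    · -- the counting bound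
      have hsplit : (∑ u ∈ W, (1 : ℝ) / ((W.filter (A u)).card + 1)) =
          (∑ u ∈ W', (1 : ℝ) / ((W.filter (A u)).card + 1)) +
          (∑ u ∈ T, (1 : ℝ) / ((W.filter (A u)).card + 1)) :=
        (Finset.sum_sdiff hTsub).symm
      have hpos : (0 : ℝ) < (N.card : ℝ) + 1 := by positivity
      have hTbound : (∑ u ∈ T, (1 : ℝ) / ((W.filter (A u)).card + 1)) ≤ 1 := by
        have h1 : ∀ u ∈ T, (1 : ℝ) / ((W.filter (A u)).card + 1) ≤ 1 / ((N.card : ℝ) + 1) := by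
          intro u hu
          apply one_div_le_one_div_of_le hpos
          have := hmin u (hTsub hu)
          exact_mod_cast Nat.add_le_add_right this 1
        calc (∑ u ∈ T, (1 : ℝ) / ((W.filter (A u)).card + 1))
            ≤ ∑ u ∈ T, (1 : ℝ) / ((N.card : ℝ) + 1) := Finset.sum_le_sum h1
          _ = T.card * (1 / ((N.card : ℝ) + 1)) := by rw [Finset.sum_const, nsmul_eq_mul]
          _ = 1 := by
              have hvN : v ∉ N := fun h => hirr v (mem_filter.mp h).2
              rw [hT, card_insert_of_notMem hvN]
              push_cast
              field_simp
    
      have hW'bound : (∑ u ∈ W', (1 : ℝ) / ((W.filter (A u)).card + 1)) ≤ (S'.card : ℝ) := by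
        refine le_trans (Finset.sum_le_sum ?_) hS'bound
        intro u hu
        apply one_div_le_one_div_of_le (by positivity)
        have hsub : W'.filter (A u) ⊆ W.filter (A u) :=
          Finset.filter_subset_filter _ (sdiff_subset)
        exact_mod_cast Nat.add_le_add_right (Finset.card_le_card hsub) 1
      rw [hsplit, hcard]
      linarith

/-- any finite digraph with irreflexive arc relation contains an
acyclic set of size at least `∑_v 1/(d⁺(v)+1)`. -/
theorem exists_acyclic_set_caro_wei {V : Type*} [Fintype V] [DecidableEq V]
    (A : V → V → Prop) [DecidableRel A] (hirr : Irreflexive A) :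
    ∃ S : Finset V, AcyclicOn A S ∧
      (∑ v : V, (1 : ℝ) / (outDeg A v + 1)) ≤ S.card := by
  obtain ⟨S, -, hacyc, hbound⟩ := caro_wei_aux A hirr Finset.univ
  exact ⟨S, hacyc, by simpa [outDeg] using hbound⟩
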